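/- arXiv:1412.2278 — 2 statements merged into one kernel-verified Lean document; each statement's English description precedes it below -/
import Mathlib

section
/- For each k ≥ 2, define u_k on [0,1] by u_k(t) = k if t ∈ [l/k - 1/(2k²), l/k + 1/(2k²)] for some integer 1 ≤ l ≤ k-1, and u_k(t) = 0 otherwise, with state y_k(t) = ∫₀ᵗ u_k(s) ds. Then the cost ∫₀¹ (u_k(t)²/(1+u_k(t)⁴) + (y_k(t)-t)²) dt tends to 0 as k → ∞. -/
open MeasureTheory intervalIntegral Set Filter

lemma key1 (K c t : ℝ) (hK : 1 ≤ K) :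
    K * max (min t (c + 1/(2*K^2)) - (c - 1/(2*K^2))) 0 ≤ min t c - min t (c - 1/K) := by
  have hK0 : (0:ℝ) < K := by linarith
  set δ : ℝ := 1/(2*K^2) with hδdef
  have hδ0 : 0 < δ := by positivity
  have hKδ : K * δ = 1/(2*K) := by field_simp [hδdef]; rw [hδdef]; field_simp
  have hδK : δ ≤ 1/K := by
    rw [hδdef, div_le_div_iff₀ (by positivity) hK0]; nlinarith
  rcases le_total t (c - δ) with h1 | h1
  · have : min t (c+δ) - (c - δ) ≤ 0 := by
      have : min t (c+δ) ≤ t := min_le_left _ _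
      linarith
    rw [max_eq_right this, mul_zero]
    have : min t (c - 1/K) ≤ min t c := min_le_min le_rfl (by linarith)
    linarith
  · have hmin2 : min t (c - 1/K) = c - 1/K := min_eq_right (by linarith)
    rcases le_total t c with h2 | h2
    · have h3 : min t c = t := min_eq_left h2
      have h4 : min t (c+δ) = t := min_eq_left (by linarith)
      have h5 : (0:ℝ) ≤ t - (c - δ) := by linarith
      rw [h3, hmin2, h4, max_eq_left h5]
      have h1K : 1/(2*K) ≤ 1/K := by
        rw [div_le_div_iff₀ (by positivity) hK0]; nlinarith
      nlinarith [mul_nonneg (sub_nonneg.2 hK) (sub_nonneg.2 h2)]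
    · have h3 : min t c = c := min_eq_right h2
      rw [h3, hmin2]
      have h6 : max (min t (c+δ) - (c - δ)) 0 ≤ 2*δ := by
        apply max_le _ (by positivity)
        have : min t (c+δ) ≤ c+δ := min_le_right _ _
        linarith
      calc K * max (min t (c+δ) - (c - δ)) 0 ≤ K * (2*δ) := by
            exact mul_le_mul_of_nonneg_left h6 hK0.le
        _ ≤ c - (c - 1/K) := by
            have h7 : K * (2*δ) = 1/K := by
              rw [show K*(2*δ) = 2*(K*δ) by ring, hKδ]; field_simp
            linarith

lemma key2 (K c t : ℝ) (hK : 1 ≤ K) :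
    min t (c + 1/K) - min t c ≤ K * max (min t (c + 1/(2*K^2)) - (c - 1/(2*K^2))) 0 := by
  have hK0 : (0:ℝ) < K := by linarith
  set δ : ℝ := 1/(2*K^2) with hδdef
  have hδ0 : 0 < δ := by positivity
  have hKδ : K * δ = 1/(2*K) := by field_simp [hδdef]; rw [hδdef]; field_simp
  have hδK : δ ≤ 1/K := by
    rw [hδdef, div_le_div_iff₀ (by positivity) hK0]
    nlinarith
  rcases le_total t c with h1 | h1
  · have h1K : (0:ℝ) < 1/K := by positivity
    have h2 : min t (c + 1/K) = t := min_eq_left (by linarith)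
    rw [h2, min_eq_left h1, sub_self]
    positivity
  · have h3 : min t c = c := min_eq_right h1
    rcases le_total t (c + δ) with h4 | h4
    · have h5 : min t (c+δ) = t := min_eq_left h4
      have h6 : (0:ℝ) ≤ t - (c - δ) := by linarith
      rw [h3, h5, max_eq_left h6]
      have h7 : min t (c + 1/K) ≤ t := min_le_left _ _
      nlinarith [mul_nonneg (sub_nonneg.2 hK) (sub_nonneg.2 h1)]
    · have h5 : min t (c+δ) = c+δ := min_eq_right h4
      rw [h3, h5]
      have h6 : max (c + δ - (c - δ)) 0 = 2*δ := by
        rw [max_eq_left (by linarith)]; ring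
      rw [h6]
      have h7 : K * (2*δ) = 1/K := by
        rw [show K*(2*δ) = 2*(K*δ) by ring, hKδ]; field_simp
      have h8 : min t (c + 1/K) ≤ c + 1/K := min_le_right _ _
      linarith

lemma intInd (a b c x z : ℝ) :
    IntervalIntegrable ((Set.Icc a b).indicator fun _ => c) volume x z := by
  rw [intervalIntegrable_iff]
  exact (MeasureTheory.integrableOn_const measure_Ioc_lt_top.ne).indicator
    measurableSet_Icc

lemma intB (a b c t : ℝ) (ha : 0 < a) (hab : a ≤ b) (ht : 0 ≤ t) :
    ∫ s in (0:ℝ)..t, (Set.Icc a b).indicator (fun _ => c) s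
      = c * max (min t b - a) 0 := by
  rw [intervalIntegral.integral_of_le ht,
    MeasureTheory.setIntegral_indicator measurableSet_Icc]
  have hset : Set.Ioc 0 t ∩ Set.Icc a b = Set.Icc a (min t b) := by
    ext x
    simp only [Set.mem_inter_iff, Set.mem_Ioc, Set.mem_Icc, le_min_iff]
    constructor
    · rintro ⟨⟨h1, h2⟩, h3, h4⟩; exact ⟨h3, h2, h4⟩
    · rintro ⟨h1, h2, h3⟩; exact ⟨⟨lt_of_lt_of_le ha h1, h2⟩, h1, h3⟩
  rw [hset, MeasureTheory.setIntegral_const, Real.volume_real_Icc,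
    smul_eq_mul, mul_comm]

open Classical in
/-- The explicit minimizing sequence `u_k` (equal to `k` on the intervals
`[l/k - 1/(2k²), l/k + 1/(2k²)]`, `1 ≤ l ≤ k-1`, and `0` elsewhere), with state
`y_k(t) = ∫₀ᵗ u_k`, drives the cost
`∫₀¹ (u_k²/(1+u_k⁴) + (y_k - t)²) dt` to `0` as `k → ∞`. -/
theorem stmt2 (u : ℕ → ℝ → ℝ) (y : ℕ → ℝ → ℝ)
    (hu : ∀ k t, u k t =
      if ∃ l : ℕ, 1 ≤ l ∧ l ≤ k - 1 ∧ |t - (l : ℝ)/k| ≤ 1/(2*(k:ℝ)^2)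
      then (k : ℝ) else 0)
    (hy : ∀ k t, y k t = ∫ s in (0:ℝ)..t, u k s) :
    Filter.Tendsto
      (fun k => ∫ t in (0:ℝ)..1,
        ((u k t)^2 / (1 + (u k t)^4) + (y k t - t)^2))
      Filter.atTop (nhds 0) := by
  set I : ℕ → ℝ := fun k => ∫ t in (0:ℝ)..1,
      ((u k t)^2 / (1 + (u k t)^4) + (y k t - t)^2) with hI
  -- the main per-k estimate
  have main : ∀ k : ℕ, 2 ≤ k → I k ≤ 2/(k:ℝ)^2 := by
    intro k hk
    set K : ℝ := (k:ℝ) with hKdef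
    have hK2 : (2:ℝ) ≤ K := by rw [hKdef]; exact_mod_cast hk
    have hK1 : (1:ℝ) ≤ K := by linarith
    have hK0 : (0:ℝ) < K := by linarith
    set δ : ℝ := 1/(2*K^2) with hδdef
    have hδ0 : 0 < δ := by positivity
    have hδK : δ < 1/K := by
      rw [hδdef, div_lt_div_iff₀ (by positivity) hK0]; nlinarith
    -- step A : u k as a sum of indicators
    have hA : ∀ s : ℝ, u k s = ∑ l ∈ Finset.range (k-1),
        (Set.Icc (((l:ℝ)+1)/K - δ) (((l:ℝ)+1)/K + δ)).indicator (fun _ => K) s := by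
      intro s
      rw [hu]
      split_ifs with h
      · obtain ⟨l, h1, h2, h3⟩ := h
        rw [abs_le] at h3
        have hlc : ((l - 1 : ℕ):ℝ) = (l:ℝ) - 1 := by
          push_cast [h1]; ring
        rw [Finset.sum_eq_single (l-1)]
        · rw [Set.indicator_of_mem]
          rw [Set.mem_Icc, hlc]
          constructor <;> [skip; skip] <;>
            · rw [show ((l:ℝ) - 1 + 1) = (l:ℝ) by ring]; linarith [h3.1, h3.2]
        · intro b hb hbne
          rw [Set.indicator_of_notMem]
          rw [Set.mem_Icc]
          rintro ⟨hb1, hb2⟩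
          have hbl : ¬ (b + 1 = l) := by
            intro hc; exact hbne (by omega)
          have h2δK : 2*δ*K = 1/K := by
            rw [hδdef]; field_simp
          rcases Nat.lt_or_ge (b+1) l with hlt | hge
          · have : ((b:ℝ)+1) + 1 ≤ (l:ℝ) := by exact_mod_cast hlt
            have hd : (l:ℝ)/K - ((b:ℝ)+1)/K ≤ 2*δ := by linarith [h3.1, h3.2]
            have : (l:ℝ) - ((b:ℝ)+1) ≤ 2*δ*K := by
              have := mul_le_mul_of_nonneg_right hd hK0.le
              calc (l:ℝ) - ((b:ℝ)+1) = ((l:ℝ)/K - ((b:ℝ)+1)/K) * K := by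
                    field_simp
                _ ≤ 2*δ*K := this
            rw [h2δK] at this
            have : (1:ℝ)/K ≤ 1/2 := by
              rw [div_le_div_iff₀ hK0 (by norm_num)]; linarith
            linarith
          · have hge' : l + 1 ≤ b + 1 := by omega
            have : (l:ℝ) + 1 ≤ ((b:ℝ)+1) := by exact_mod_cast hge'
            have hd : ((b:ℝ)+1)/K - (l:ℝ)/K ≤ 2*δ := by linarith [h3.1, h3.2]
            have : ((b:ℝ)+1) - (l:ℝ) ≤ 2*δ*K := by
              have := mul_le_mul_of_nonneg_right hd hK0.le
              calc ((b:ℝ)+1) - (l:ℝ) = (((b:ℝ)+1)/K - (l:ℝ)/K) * K := by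
                    field_simp
                _ ≤ 2*δ*K := this
            rw [h2δK] at this
            have : (1:ℝ)/K ≤ 1/2 := by
              rw [div_le_div_iff₀ hK0 (by norm_num)]; linarith
            linarith
        · intro hnotmem
          exfalso
          exact hnotmem (Finset.mem_range.2 (by omega))
      · symm
        apply Finset.sum_eq_zero
        intro l hl
        have hl' := Finset.mem_range.1 hl
        rw [Set.indicator_of_notMem]
        rw [Set.mem_Icc]
        rintro ⟨hb1, hb2⟩
        apply h
        refine ⟨l+1, by omega, by omega, ?_⟩
        rw [abs_le]
        push_cast
        constructor <;> linarith
    -- step B : formula for y on [0,1]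
    have hyf : ∀ t : ℝ, 0 ≤ t → y k t = ∑ l ∈ Finset.range (k-1),
        K * max (min t (((l:ℝ)+1)/K + δ) - (((l:ℝ)+1)/K - δ)) 0 := by
      intro t ht
      rw [hy]
      rw [intervalIntegral.integral_congr (g := fun s => ∑ l ∈ Finset.range (k-1),
        (Set.Icc (((l:ℝ)+1)/K - δ) (((l:ℝ)+1)/K + δ)).indicator (fun _ => K) s)
        (fun s _ => hA s)]
      rw [intervalIntegral.integral_finset_sum (fun l _ => intInd _ _ _ _ _)]
      refine Finset.sum_congr rfl (fun l _ => ?_)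
      have h1K : 1/K ≤ ((l:ℝ)+1)/K := by
        gcongr
        linarith [Nat.cast_nonneg (α := ℝ) l]
      rw [intB _ _ _ _ (by linarith) (by linarith) ht]
    -- step C : bounds on y on [0,1]
    have hyub : ∀ t ∈ Set.Icc (0:ℝ) 1, y k t ≤ t := by
      intro t ht
      rw [hyf t ht.1]
      have hsum : ∑ l ∈ Finset.range (k-1),
          K * max (min t (((l:ℝ)+1)/K + δ) - (((l:ℝ)+1)/K - δ)) 0
          ≤ ∑ l ∈ Finset.range (k-1),
            (min t (((l:ℝ)+1)/K) - min t ((l:ℝ)/K)) := by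
        apply Finset.sum_le_sum
        intro l _
        have h := key1 K (((l:ℝ)+1)/K) t hK1
        have e : ((l:ℝ)+1)/K - 1/K = (l:ℝ)/K := by ring
        rw [e] at h
        exact h
      have htel := Finset.sum_range_sub (fun l : ℕ => min t ((l:ℝ)/K)) (k-1)
      push_cast at htel
      rw [htel] at hsum
      have h1 : min t (((k-1:ℕ):ℝ)/K) ≤ t := min_le_left _ _
      have h2 : min t ((0:ℝ)/K) = 0 := by
        rw [zero_div]; exact min_eq_right ht.1
      rw [h2] at hsum
      linarith
    have hylb : ∀ t ∈ Set.Icc (0:ℝ) 1, t - 1/K ≤ y k t := by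
      intro t ht
      rw [hyf t ht.1]
      have hsum : ∑ l ∈ Finset.range (k-1),
          (min t (((l:ℝ)+1+1)/K) - min t (((l:ℝ)+1)/K))
          ≤ ∑ l ∈ Finset.range (k-1),
            K * max (min t (((l:ℝ)+1)/K + δ) - (((l:ℝ)+1)/K - δ)) 0 := by
        apply Finset.sum_le_sum
        intro l _
        have h := key2 K (((l:ℝ)+1)/K) t hK1
        have e : ((l:ℝ)+1)/K + 1/K = ((l:ℝ)+1+1)/K := by ring
        rw [e] at h
        exact h
      have htel := Finset.sum_range_sub (fun l : ℕ => min t (((l:ℝ)+1)/K)) (k-1)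
      push_cast at htel
      rw [htel] at hsum
      have hc : ((k-1:ℕ):ℝ) = K - 1 := by
        rw [hKdef, Nat.cast_sub (by omega)]; norm_num
      rw [hc] at hsum
      have e1 : (K - 1 + 1)/K = 1 := by field_simp; ring
      rw [e1] at hsum
      have h1 : min t 1 = t := min_eq_left ht.2
      have h2 : min t ((0+1:ℝ)/K) ≤ 1/K := by
        rw [show ((0:ℝ)+1)/K = 1/K by ring]; exact min_le_right _ _
      rw [h1] at hsum
      linarith
    -- step D : pointwise bound on the integrand
    have hbd : ∀ t ∈ Set.Icc (0:ℝ) 1,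
        (u k t)^2/(1+(u k t)^4) + (y k t - t)^2 ≤ 2/K^2 := by
      intro t ht
      have h1 : (u k t)^2/(1+(u k t)^4) ≤ 1/K^2 := by
        rw [hu]
        split_ifs with h
        · rw [div_le_div_iff₀ (by positivity) (by positivity)]
          nlinarith
        · norm_num
          positivity
      have h2 : (y k t - t)^2 ≤ 1/K^2 := by
        have ha := hyub t ht
        have hb := hylb t ht
        have h3 : (y k t - t)^2 ≤ (1/K)^2 := sq_le_sq' (by linarith) (by linarith)
        calc (y k t - t)^2 ≤ (1/K)^2 := h3
          _ = 1/K^2 := by rw [div_pow, one_pow]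
      have h4 : (2:ℝ)/K^2 = 1/K^2 + 1/K^2 := by ring
      linarith
    -- step E : integrability
    have hum : Measurable (u k) := by
      have he : u k = fun s => ∑ l ∈ Finset.range (k-1),
          (Set.Icc (((l:ℝ)+1)/K - δ) (((l:ℝ)+1)/K + δ)).indicator (fun _ => K) s :=
        funext hA
      rw [he]
      exact Finset.measurable_sum _ fun l _ =>
        measurable_const.indicator measurableSet_Icc
    have hint1 : IntervalIntegrable (fun t => (u k t)^2/(1+(u k t)^4)) volume 0 1 := by
      rw [intervalIntegrable_iff]
      apply Integrable.mono' (g := fun _ : ℝ => (1:ℝ))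
        (MeasureTheory.integrableOn_const measure_Ioc_lt_top.ne)
      · exact ((hum.pow_const 2).div
          (measurable_const.add (hum.pow_const 4))).aestronglyMeasurable
      · refine Filter.Eventually.of_forall fun t => ?_
        have h0 : (0:ℝ) < 1 + (u k t)^4 := by positivity
        rw [Real.norm_eq_abs, abs_of_nonneg (by positivity), div_le_one h0]
        nlinarith [sq_nonneg ((u k t)^2 - 1)]
    have hint2 : IntervalIntegrable (fun t => (y k t - t)^2) volume 0 1 := by
      have hφ : Continuous (fun t : ℝ => ((∑ l ∈ Finset.range (k-1),
          K * max (min t (((l:ℝ)+1)/K + δ) - (((l:ℝ)+1)/K - δ)) 0) - t)^2) := by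
        apply Continuous.pow
        apply Continuous.sub _ continuous_id
        apply continuous_finset_sum
        intro l _
        exact continuous_const.mul
          (((continuous_id.min continuous_const).sub continuous_const).max continuous_const)
      rw [intervalIntegrable_iff]
      have hc := hφ.intervalIntegrable (μ := volume) 0 1
      rw [intervalIntegrable_iff] at hc
      apply hc.congr_fun ?_ measurableSet_uIoc
      intro t ht
      rw [Set.uIoc_of_le (by norm_num : (0:ℝ) ≤ 1)] at ht
      simp only
      rw [hyf t ht.1.le]
    -- step F : the integral bound
    have hle : I k ≤ ∫ t in (0:ℝ)..1, (2/K^2 : ℝ) :=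
      intervalIntegral.integral_mono_on zero_le_one (hint1.add hint2)
        intervalIntegrable_const hbd
    rw [intervalIntegral.integral_const] at hle
    simpa using hle
  have hnn : ∀ k, 0 ≤ I k := fun k =>
    intervalIntegral.integral_nonneg zero_le_one fun t _ => by positivity
  apply tendsto_of_tendsto_of_tendsto_of_le_of_le' tendsto_const_nhds
    (Filter.Tendsto.div_atTop (tendsto_const_nhds (x := (2:ℝ)))
      ((tendsto_pow_atTop two_ne_zero).comp tendsto_natCast_atTop_atTop))
  · exact Filter.Eventually.of_forall hnn
  · filter_upwards [Filter.eventually_ge_atTop 2] with k hk using main k hk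
end

section
/- Pushforward moment identity: let μ be a finite Borel measure on ℝᵐ, p a positive even integer, q(u) = u/(1+‖u‖_p^p)^{1/p}, and γ = q_*μ the pushforward of μ by q. Then for any multi-index α with |α| ≤ p, ∫ u^α/(1+‖u‖_p^p) dμ(u) = ∫ (1 - ‖w‖_p^p)^{(p-|α|)/p} w^α dγ(w). -/
open MeasureTheory

/-- Pushforward moment identity: for a finite Borel measure `μ` on `ℝᵐ`, an even
positive integer `p`, the map `q(u) = u/(1+‖u‖_p^p)^{1/p}` and the pushforward
`γ = q_*μ`, every multi-index `α` with `|α| ≤ p` satisfies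
`∫ u^α/(1+‖u‖_p^p) dμ = ∫ (1-‖w‖_p^p)^{(p-|α|)/p} w^α dγ`. -/
theorem stmt18 (m p : ℕ) (hp : 0 < p) (hev : Even p)
    (μ : Measure (Fin m → ℝ)) [IsFiniteMeasure μ]
    (q : (Fin m → ℝ) → (Fin m → ℝ))
    (hq : ∀ u, q u = fun i => u i / (1 + ∑ j, (u j) ^ p) ^ ((p : ℝ)⁻¹))
    (γ : Measure (Fin m → ℝ)) (hγ : γ = μ.map q)
    (α : Fin m → ℕ) (hα : (∑ i, α i) ≤ p) :
    (∫ u, (∏ i, (u i) ^ (α i)) / (1 + ∑ j, (u j) ^ p) ∂μ)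
      = ∫ w, (1 - ∑ j, (w j) ^ p) ^ (((p : ℝ) - ∑ i, (α i : ℝ)) / p)
          * ∏ i, (w i) ^ (α i) ∂γ := by
  have hp0 : (p : ℝ) ≠ 0 := Nat.cast_ne_zero.mpr hp.ne'
  set r : ℝ := (((p : ℝ) - ∑ i, (α i : ℝ)) / p) with hr
  have hA : (∑ i, (α i : ℝ)) ≤ (p : ℝ) := by
    push_cast [← Nat.cast_sum]
    exact_mod_cast hα
  have hr0 : 0 ≤ r := div_nonneg (sub_nonneg.mpr hA) (Nat.cast_nonneg p)
  -- positivity of the denominator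
  have hS : ∀ u : Fin m → ℝ, 0 < 1 + ∑ j, (u j) ^ p := by
    intro u
    have : 0 ≤ ∑ j, (u j) ^ p :=
      Finset.sum_nonneg fun j _ => hev.pow_nonneg _
    linarith
  -- continuity of the sum map
  have hsum : Continuous fun u : Fin m → ℝ => ∑ j, (u j) ^ p :=
    continuous_finset_sum _ fun j _ => (continuous_apply j).pow p
  -- continuity of q
  have hqc : Continuous q := by
    have : Continuous fun u : Fin m → ℝ =>
        (1 + ∑ j, (u j) ^ p) ^ ((p : ℝ)⁻¹) := by
      apply Continuous.rpow_const (continuous_const.add hsum)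
      intro u; exact Or.inl (hS u).ne'
    simp only [funext hq]
    exact continuous_pi fun i => (continuous_apply i).div this
      (fun u => (Real.rpow_pos_of_pos (hS u) _).ne')
  -- continuity of the integrand on the right
  have hfc : Continuous fun w : Fin m → ℝ =>
      (1 - ∑ j, (w j) ^ p) ^ r * ∏ i, (w i) ^ (α i) := by
    apply Continuous.mul
    · exact Continuous.rpow_const (continuous_const.sub hsum) fun w => Or.inr hr0
    · exact continuous_finset_prod _ fun i _ => (continuous_apply i).pow _
  rw [hγ, integral_map hqc.measurable.aemeasurable hfc.aestronglyMeasurable]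
  refine integral_congr_ae (Filter.Eventually.of_forall fun u => ?_)
  have hSu := hS u
  set S : ℝ := 1 + ∑ j, (u j) ^ p with hSdef
  have htpow : ((S ^ ((p : ℝ)⁻¹)) : ℝ) ^ (p : ℕ) = S := by
    rw [← Real.rpow_natCast (S ^ ((p : ℝ)⁻¹)) p, ← Real.rpow_mul hSu.le,
      inv_mul_cancel₀ hp0, Real.rpow_one]
  have hqsum : ∑ j, (q u j) ^ p = (∑ j, (u j) ^ p) / S := by
    rw [hq]
    simp only [div_pow, htpow, ← Finset.sum_div]
    rw [← hSdef, htpow]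
  have h1 : 1 - ∑ j, (q u j) ^ p = 1 / S := by
    rw [hqsum]
    field_simp
    rw [hSdef]; ring
  have hprod : ∏ i, (q u i) ^ (α i)
      = (∏ i, (u i) ^ (α i)) / S ^ ((∑ i, (α i : ℝ)) * (p : ℝ)⁻¹) := by
    rw [hq]
    simp only [div_pow, Finset.prod_div_distrib, ← pow_mul]
    congr 1
    rw [Finset.prod_pow_eq_pow_sum, ← Real.rpow_natCast (S ^ ((p:ℝ)⁻¹)),
      ← Real.rpow_mul hSu.le]
    push_cast
    ring_nf
  show (∏ i, (u i) ^ (α i)) / S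
      = (1 - ∑ j, (q u j) ^ p) ^ r * ∏ i, (q u i) ^ (α i)
  rw [h1, hprod, one_div, Real.inv_rpow hSu.le, inv_mul_eq_div, div_div,
    ← Real.rpow_add hSu]
  have hexp : (∑ i, (α i : ℝ)) * (p : ℝ)⁻¹ + r = 1 := by
    rw [hr]; field_simp
    ring
  rw [hexp, Real.rpow_one]
end
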